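/- For every fixed integer δ ≥ 0, Σ_{(δ1,δ2,δ3)} 1^{δ1} · 2^{δ2} · (3/2)^{δ3} · S_{δ1}(d) · S_{δ2}(d) · S_{δ3}(d) = ((3/2)·d³)^δ/δ! + O(d^{3δ−1}) as d → ∞, where the sum ranges over all ordered triples (δ1, δ2, δ3) of nonnegative integers with δ1 + δ2 + δ3 = δ. -/

import Mathlib

open Filter Asymptotics

/-- `S k d = Σ_{d ≥ i₁ ≥ i₂ ≥ ⋯ ≥ i_k ≥ 1} i₁² i₂² ⋯ i_k²`, evaluated in `ℝ`,
with `S 0 d = 1`. -/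
noncomputable def S : ℕ → ℕ → ℝ
  | 0, _ => 1
  | k + 1, d => ∑ i ∈ Finset.Icc 1 d, (i : ℝ) ^ 2 * S k i

section Aux
open Finset

lemma pow_diff_bounds (m d : ℕ) :
    (m + 1 : ℝ) * (d:ℝ)^m ≤ ((d:ℝ)+1)^(m+1) - (d:ℝ)^(m+1) ∧
    ((d:ℝ)+1)^(m+1) - (d:ℝ)^(m+1) ≤ (m+1 : ℝ) * ((d:ℝ)+1)^m := by
  have h := geom_sum₂_mul ((d:ℝ)+1) (d:ℝ) (m+1)
  simp only [add_sub_cancel_left, mul_one] at h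
  rw [← h]
  have hd : (0:ℝ) ≤ d := Nat.cast_nonneg d
  constructor
  · have : ∀ i ∈ range (m+1), (d:ℝ)^m ≤ ((d:ℝ)+1)^i * (d:ℝ)^(m+1-1-i) := by
      intro i hi
      simp only [mem_range] at hi
      have hi' : i ≤ m := Nat.lt_succ_iff.mp hi
      calc (d:ℝ)^m = (d:ℝ)^i * (d:ℝ)^(m-i) := by rw [← pow_add]; congr 1; omega
        _ ≤ ((d:ℝ)+1)^i * (d:ℝ)^(m+1-1-i) := by
            have : m + 1 - 1 - i = m - i := by omega
            rw [this]
            gcongr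
            linarith
    calc (m+1:ℝ) * (d:ℝ)^m = ∑ _i ∈ range (m+1), (d:ℝ)^m := by
          rw [Finset.sum_const, card_range]; push_cast; ring
      _ ≤ _ := Finset.sum_le_sum this
  · have : ∀ i ∈ range (m+1), ((d:ℝ)+1)^i * (d:ℝ)^(m+1-1-i) ≤ ((d:ℝ)+1)^m := by
      intro i hi
      simp only [mem_range] at hi
      have hi' : i ≤ m := Nat.lt_succ_iff.mp hi
      calc ((d:ℝ)+1)^i * (d:ℝ)^(m+1-1-i) ≤ ((d:ℝ)+1)^i * ((d:ℝ)+1)^(m-i) := by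
            have : m + 1 - 1 - i = m - i := by omega
            rw [this]; gcongr; linarith
        _ = ((d:ℝ)+1)^m := by rw [← pow_add]; congr 1; omega
    calc _ ≤ ∑ _i ∈ range (m+1), ((d:ℝ)+1)^m := Finset.sum_le_sum this
      _ = (m+1:ℝ) * ((d:ℝ)+1)^m := by rw [Finset.sum_const, card_range]; push_cast; ring

lemma sum_pow_bounds (m : ℕ) : ∀ d : ℕ,
    (d:ℝ)^(m+1)/(m+1) ≤ (∑ i ∈ Icc 1 d, (i:ℝ)^m) ∧
    (∑ i ∈ Icc 1 d, (i:ℝ)^m) ≤ (d:ℝ)^(m+1)/(m+1) + (d:ℝ)^m := by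
  intro d
  induction d with
  | zero => simp
  | succ d ih =>
    rw [← Finset.Ico_add_one_right_eq_Icc, Finset.sum_Ico_succ_top (by omega), Finset.Ico_add_one_right_eq_Icc]
    obtain ⟨ih1, ih2⟩ := ih
    obtain ⟨h1, h2⟩ := pow_diff_bounds m d
    have hm : (0:ℝ) < (m:ℝ)+1 := by positivity
    have hc : ((d+1:ℕ):ℝ) = (d:ℝ)+1 := by push_cast; ring
    rw [hc]
    have ih1' : (d:ℝ)^(m+1) ≤ (∑ i ∈ Icc 1 d, (i:ℝ)^m) * ((m:ℝ)+1) := by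
      rw [div_le_iff₀ hm] at ih1; exact ih1
    have ih2' : (∑ i ∈ Icc 1 d, (i:ℝ)^m) * ((m:ℝ)+1) ≤ (d:ℝ)^(m+1) + (d:ℝ)^m * ((m:ℝ)+1) := by
      have := mul_le_mul_of_nonneg_right ih2 hm.le
      calc (∑ i ∈ Icc 1 d, (i:ℝ)^m) * ((m:ℝ)+1) ≤ ((d:ℝ)^(m+1)/((m:ℝ)+1) + (d:ℝ)^m) * ((m:ℝ)+1) := this
        _ = (d:ℝ)^(m+1) + (d:ℝ)^m * ((m:ℝ)+1) := by field_simp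
    constructor
    · rw [div_le_iff₀ hm]
      nlinarith [h2, ih1']
    · have key : (∑ k ∈ Icc 1 d, (k:ℝ)^m) ≤ ((d:ℝ)+1)^(m+1)/((m:ℝ)+1) := by
        rw [le_div_iff₀ hm]
        nlinarith [h1, ih2']
      linarith

lemma S_bound (k : ℕ) : ∃ C : ℝ, 0 ≤ C ∧ ∀ d : ℕ, 1 ≤ d →
    |S k d - (d:ℝ)^(3*k) / (3^k * (k.factorial : ℝ))| ≤ C * (d:ℝ)^(3*k) / d := by
  induction k with
  | zero =>
    refine ⟨0, le_refl 0, fun d hd => ?_⟩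
    simp [S]
  | succ k ih =>
    obtain ⟨C, hC, hS⟩ := ih
    refine ⟨C + 1, by linarith, fun d hd => ?_⟩
    have hd1 : (1:ℝ) ≤ (d:ℝ) := by exact_mod_cast hd
    have hd0 : (0:ℝ) < (d:ℝ) := by linarith
    set c : ℝ := 3^k * (k.factorial : ℝ) with hc
    have hc1 : (1:ℝ) ≤ c := by
      have : (1:ℝ) ≤ (k.factorial : ℝ) := by exact_mod_cast k.factorial_pos
      have h3 : (1:ℝ) ≤ 3^k := one_le_pow₀ (by norm_num : (1:ℝ) ≤ 3)
      nlinarith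
    have hc0 : (0:ℝ) < c := by linarith
    -- split the sum
    have split : S (k+1) d = (∑ i ∈ Icc 1 d, (i:ℝ)^(3*k+2))/c
        + ∑ i ∈ Icc 1 d, (i:ℝ)^2 * (S k i - (i:ℝ)^(3*k)/c) := by
      show (∑ i ∈ Icc 1 d, (i:ℝ)^2 * S k i) = _
      rw [Finset.sum_div, ← Finset.sum_add_distrib]
      apply Finset.sum_congr rfl
      intro i _
      have hpow : (i:ℝ)^(3*k+2) = (i:ℝ)^2 * (i:ℝ)^(3*k) := by ring
      field_simp [hpow]
      ring
    -- factorial identity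
    have hfac : (3:ℝ)^(k+1) * ((k+1).factorial : ℝ) = c * ((3*k+2 : ℕ) + 1) := by
      rw [hc, Nat.factorial_succ]
      push_cast
      ring
    -- bound on main sum term
    have hm := sum_pow_bounds (3*k+2) d
    have hB : (0:ℝ) ≤ (d:ℝ)^(3*k+2) := by positivity
    have habs : |(∑ i ∈ Icc 1 d, (i:ℝ)^(3*k+2)) - (d:ℝ)^(3*k+2+1) / ((3*k+2:ℕ)+1)| ≤ (d:ℝ)^(3*k+2) := by
      rw [abs_le]
      push_cast at hm ⊢
      constructor <;> [linarith [hm.1]; linarith [hm.2]]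
    have hmain : |(∑ i ∈ Icc 1 d, (i:ℝ)^(3*k+2))/c - (d:ℝ)^(3*(k+1)) / (3^(k+1) * ((k+1).factorial : ℝ))| ≤ (d:ℝ)^(3*k+2) := by
      have h31 : (d:ℝ)^(3*(k+1)) / (3^(k+1) * ((k+1).factorial : ℝ))
          = ((d:ℝ)^(3*k+2+1) / (((3*k+2:ℕ):ℝ)+1)) / c := by
        rw [hfac]
        have h3 : 3*(k+1) = 3*k+2+1 := by ring
        rw [h3]
        push_cast
        rw [div_div]
        ring_nf
      rw [h31, div_sub_div_same, abs_div, abs_of_pos hc0]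
      calc |_| / c ≤ |(∑ i ∈ Icc 1 d, (i:ℝ)^(3*k+2)) - (d:ℝ)^(3*k+2+1) / (((3*k+2:ℕ):ℝ)+1)| := div_le_self (abs_nonneg _) hc1
        _ ≤ (d:ℝ)^(3*k+2) := by push_cast at habs ⊢; exact habs
    -- bound on error sum
    have herr : |∑ i ∈ Icc 1 d, (i:ℝ)^2 * (S k i - (i:ℝ)^(3*k)/c)| ≤ C * (d:ℝ)^(3*k+2) := by
      calc |∑ i ∈ Icc 1 d, (i:ℝ)^2 * (S k i - (i:ℝ)^(3*k)/c)|
          ≤ ∑ i ∈ Icc 1 d, |(i:ℝ)^2 * (S k i - (i:ℝ)^(3*k)/c)| := Finset.abs_sum_le_sum_abs _ _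
        _ ≤ ∑ i ∈ Icc 1 d, C * (d:ℝ)^(3*k+1) := by
            apply Finset.sum_le_sum
            intro i hi
            rw [Finset.mem_Icc] at hi
            have hi1 : (1:ℝ) ≤ (i:ℝ) := by exact_mod_cast hi.1
            have hi0 : (0:ℝ) < (i:ℝ) := by linarith
            have hid : (i:ℝ) ≤ (d:ℝ) := by exact_mod_cast hi.2
            rw [abs_mul, abs_pow, abs_of_pos hi0]
            calc (i:ℝ)^2 * |S k i - (i:ℝ)^(3*k)/c| ≤ (i:ℝ)^2 * (C * (i:ℝ)^(3*k) / i) := by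
                  apply mul_le_mul_of_nonneg_left (hS i hi.1) (by positivity)
              _ = C * (i:ℝ)^(3*k+1) := by field_simp; ring
              _ ≤ C * (d:ℝ)^(3*k+1) := by
                  apply mul_le_mul_of_nonneg_left _ hC
                  exact pow_le_pow_left₀ (by positivity) hid _
        _ = (d:ℝ) * (C * (d:ℝ)^(3*k+1)) := by
            rw [Finset.sum_const, Nat.card_Icc]
            simp [nsmul_eq_mul]
        _ = C * (d:ℝ)^(3*k+2) := by ring
    -- combine
    have hgoal : C * (d:ℝ)^(3*k+2) + (d:ℝ)^(3*k+2) = (C+1) * (d:ℝ)^(3*(k+1)) / d := by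
      have h3 : 3*(k+1) = (3*k+2)+1 := by ring
      rw [h3, pow_succ]
      field_simp
      ring
    calc |S (k+1) d - (d:ℝ)^(3*(k+1)) / (3^(k+1) * ((k+1).factorial : ℝ))|
        = |((∑ i ∈ Icc 1 d, (i:ℝ)^(3*k+2))/c - (d:ℝ)^(3*(k+1)) / (3^(k+1) * ((k+1).factorial : ℝ)))
            + ∑ i ∈ Icc 1 d, (i:ℝ)^2 * (S k i - (i:ℝ)^(3*k)/c)| := by rw [split]; congr 1; ring
      _ ≤ |(∑ i ∈ Icc 1 d, (i:ℝ)^(3*k+2))/c - (d:ℝ)^(3*(k+1)) / (3^(k+1) * ((k+1).factorial : ℝ))|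
            + |∑ i ∈ Icc 1 d, (i:ℝ)^2 * (S k i - (i:ℝ)^(3*k)/c)| := abs_add_le _ _
      _ ≤ (d:ℝ)^(3*k+2) + C * (d:ℝ)^(3*k+2) := add_le_add hmain herr
      _ = (C+1) * (d:ℝ)^(3*(k+1)) / d := by rw [← hgoal]; ring

lemma trinomial (x y z : ℝ) (n : ℕ) :
    ∑ a ∈ range (n+1), ∑ b ∈ range (n-a+1),
      (n.choose a : ℝ) * ((n-a).choose b : ℝ) * x^a * y^b * z^(n-a-b) = (x+y+z)^n := by
  rw [show x+y+z = x+(y+z) by ring, add_pow]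
  apply Finset.sum_congr rfl
  intro a ha
  rw [add_pow, Finset.mul_sum, Finset.sum_mul]
  apply Finset.sum_congr rfl
  intro b hb
  ring

lemma term_eq (δ a b : ℕ) (ha : a ≤ δ) (hb : b ≤ δ - a) (D : ℝ) :
    (δ.choose a : ℝ) * ((δ-a).choose b : ℝ) * (D^3/3)^a * (2*D^3/3)^b * (D^3/2)^(δ-a-b) / (δ.factorial : ℝ)
    = (1:ℝ)^a * 2^b * (3/2)^(δ-a-b) * (D^(3*a)/(3^a*(a.factorial:ℝ)))
        * (D^(3*b)/(3^b*(b.factorial:ℝ))) * (D^(3*(δ-a-b))/(3^(δ-a-b)*((δ-a-b).factorial:ℝ))) := by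
  have h1 : δ.choose a * a.factorial * (δ-a).factorial = δ.factorial :=
    Nat.choose_mul_factorial_mul_factorial ha
  have h2 : (δ-a).choose b * b.factorial * (δ-a-b).factorial = (δ-a).factorial :=
    Nat.choose_mul_factorial_mul_factorial hb
  have e1 : (δ.factorial : ℝ) = (δ.choose a : ℝ) * ((δ-a).choose b : ℝ)
      * (a.factorial : ℝ) * (b.factorial : ℝ) * ((δ-a-b).factorial : ℝ) := by
    rw [← h1, ← h2]; push_cast; ring
  have fa : (a.factorial : ℝ) ≠ 0 := by exact_mod_cast a.factorial_ne_zero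
  have fb : (b.factorial : ℝ) ≠ 0 := by exact_mod_cast b.factorial_ne_zero
  have fc : ((δ-a-b).factorial : ℝ) ≠ 0 := by exact_mod_cast (δ-a-b).factorial_ne_zero
  have ca : ((δ.choose a : ℕ) : ℝ) ≠ 0 := by
    have := Nat.choose_pos ha; positivity
  have cb : (((δ-a).choose b : ℕ) : ℝ) ≠ 0 := by
    have := Nat.choose_pos hb; positivity
  have key : (δ.choose a : ℝ) * ((δ-a).choose b : ℝ) / (δ.factorial : ℝ)
      = 1 / ((a.factorial:ℝ) * (b.factorial:ℝ) * ((δ-a-b).factorial:ℝ)) := by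
    rw [e1]; field_simp
  calc (δ.choose a : ℝ) * ((δ-a).choose b : ℝ) * (D^3/3)^a * (2*D^3/3)^b * (D^3/2)^(δ-a-b) / (δ.factorial : ℝ)
      = ((δ.choose a : ℝ) * ((δ-a).choose b : ℝ) / (δ.factorial : ℝ)) * ((D^3/3)^a * (2*D^3/3)^b * (D^3/2)^(δ-a-b)) := by ring
    _ = (1 / ((a.factorial:ℝ) * (b.factorial:ℝ) * ((δ-a-b).factorial:ℝ))) * ((D^3/3)^a * (2*D^3/3)^b * (D^3/2)^(δ-a-b)) := by rw [key]
    _ = _ := by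
        rw [div_pow, div_pow, div_pow, mul_pow]
        rw [show D^(3*a) = (D^3)^a from (pow_mul D 3 a), show D^(3*b) = (D^3)^b from (pow_mul D 3 b),
           show D^(3*(δ-a-b)) = (D^3)^(δ-a-b) from (pow_mul D 3 (δ-a-b)),
           div_pow]
        field_simp
        ring

lemma S_abs_bound (k : ℕ) : ∃ C : ℝ, 0 ≤ C ∧ ∀ d : ℕ, 1 ≤ d →
    |S k d - (d:ℝ)^(3*k) / (3^k * (k.factorial : ℝ))| ≤ C * (d:ℝ)^(3*k) / d
    ∧ |S k d| ≤ (C+1) * (d:ℝ)^(3*k)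
    ∧ |(d:ℝ)^(3*k) / (3^k * (k.factorial : ℝ))| ≤ (d:ℝ)^(3*k) := by
  obtain ⟨C, hC, h⟩ := S_bound k
  refine ⟨C, hC, fun d hd => ?_⟩
  have hd1 : (1:ℝ) ≤ (d:ℝ) := by exact_mod_cast hd
  have hd0 : (0:ℝ) < (d:ℝ) := by linarith
  have hden : (1:ℝ) ≤ 3^k * (k.factorial : ℝ) := by
    have h1 : (1:ℝ) ≤ (k.factorial : ℝ) := by exact_mod_cast k.factorial_pos
    have h3 : (1:ℝ) ≤ (3:ℝ)^k := one_le_pow₀ (by norm_num)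
    nlinarith
  have hPnn : (0:ℝ) ≤ (d:ℝ)^(3*k) / (3^k * (k.factorial : ℝ)) := by positivity
  have hP : |(d:ℝ)^(3*k) / (3^k * (k.factorial : ℝ))| ≤ (d:ℝ)^(3*k) := by
    rw [abs_of_nonneg hPnn]
    exact div_le_self (by positivity) hden
  refine ⟨h d hd, ?_, hP⟩
  have h' := h d hd
  have hdiv : C * (d:ℝ)^(3*k) / (d:ℝ) ≤ C * (d:ℝ)^(3*k) := div_le_self (by positivity) hd1
  calc |S k d| ≤ |S k d - (d:ℝ)^(3*k) / (3^k * (k.factorial : ℝ))| + |(d:ℝ)^(3*k) / (3^k * (k.factorial : ℝ))| := by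
        have := abs_add_le (S k d - (d:ℝ)^(3*k) / (3^k * (k.factorial : ℝ))) ((d:ℝ)^(3*k) / (3^k * (k.factorial : ℝ)))
        simpa using this
    _ ≤ C * (d:ℝ)^(3*k) + (d:ℝ)^(3*k) := by linarith
    _ = (C+1) * (d:ℝ)^(3*k) := by ring

lemma triple_isBigO (k1 k2 k3 : ℕ) :
    (fun d : ℕ => S k1 d * S k2 d * S k3 d
       - ((d:ℝ)^(3*k1)/(3^k1*(k1.factorial:ℝ))) * ((d:ℝ)^(3*k2)/(3^k2*(k2.factorial:ℝ)))
          * ((d:ℝ)^(3*k3)/(3^k3*(k3.factorial:ℝ))))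
      =O[atTop] fun d : ℕ => (d:ℝ)^((3*(k1+k2+k3) : ℤ) - 1) := by
  obtain ⟨C1, hC1, h1⟩ := S_abs_bound k1
  obtain ⟨C2, hC2, h2⟩ := S_abs_bound k2
  obtain ⟨C3, hC3, h3⟩ := S_abs_bound k3
  rw [isBigO_iff]
  refine ⟨C1*((C2+1)*(C3+1)) + (C2*(C3+1) + C3), ?_⟩
  filter_upwards [eventually_ge_atTop 1] with d hd
  have hd1 : (1:ℝ) ≤ (d:ℝ) := by exact_mod_cast hd
  have hd0 : (0:ℝ) < (d:ℝ) := by linarith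
  obtain ⟨e1, s1, p1⟩ := h1 d hd
  obtain ⟨e2, s2, p2⟩ := h2 d hd
  obtain ⟨e3, s3, p3⟩ := h3 d hd
  set P1 := (d:ℝ)^(3*k1)/(3^k1*(k1.factorial:ℝ))
  set P2 := (d:ℝ)^(3*k2)/(3^k2*(k2.factorial:ℝ))
  set P3 := (d:ℝ)^(3*k3)/(3^k3*(k3.factorial:ℝ))
  have hnorm : ‖(d:ℝ)^((3*(k1+k2+k3) : ℤ) - 1)‖ = (d:ℝ)^(3*(k1+k2+k3)) / (d:ℝ) := by
    rw [Real.norm_eq_abs, zpow_sub₀ (ne_of_gt hd0), zpow_one]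
    rw [show ((3*(k1+k2+k3) : ℤ)) = ((3*(k1+k2+k3) : ℕ) : ℤ) by push_cast; ring, zpow_natCast]
    rw [abs_of_pos (by positivity)]
  rw [Real.norm_eq_abs, hnorm]
  have decomp : S k1 d * S k2 d * S k3 d - P1 * P2 * P3
      = (S k1 d - P1) * S k2 d * S k3 d + P1 * (S k2 d - P2) * S k3 d + P1 * P2 * (S k3 d - P3) := by
    ring
  have habs : |S k1 d * S k2 d * S k3 d - P1 * P2 * P3|
      ≤ |S k1 d - P1| * |S k2 d| * |S k3 d| + |P1| * |S k2 d - P2| * |S k3 d| + |P1| * |P2| * |S k3 d - P3| := by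
    rw [decomp]
    calc _ ≤ |(S k1 d - P1) * S k2 d * S k3 d + P1 * (S k2 d - P2) * S k3 d| + |P1 * P2 * (S k3 d - P3)| := abs_add_le _ _
      _ ≤ |(S k1 d - P1) * S k2 d * S k3 d| + |P1 * (S k2 d - P2) * S k3 d| + |P1 * P2 * (S k3 d - P3)| := by
          have := abs_add_le ((S k1 d - P1) * S k2 d * S k3 d) (P1 * (S k2 d - P2) * S k3 d)
          linarith
      _ = _ := by rw [abs_mul, abs_mul, abs_mul, abs_mul, abs_mul, abs_mul]
  have t1 : |S k1 d - P1| * |S k2 d| * |S k3 d|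
      ≤ (C1 * (d:ℝ)^(3*k1) / d) * ((C2+1) * (d:ℝ)^(3*k2)) * ((C3+1) * (d:ℝ)^(3*k3)) := by
    gcongr <;> positivity
  have t2 : |P1| * |S k2 d - P2| * |S k3 d|
      ≤ ((d:ℝ)^(3*k1)) * (C2 * (d:ℝ)^(3*k2) / d) * ((C3+1) * (d:ℝ)^(3*k3)) := by
    gcongr <;> positivity
  have t3 : |P1| * |P2| * |S k3 d - P3|
      ≤ ((d:ℝ)^(3*k1)) * ((d:ℝ)^(3*k2)) * (C3 * (d:ℝ)^(3*k3) / d) := by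
    gcongr <;> positivity
  have collect : (C1 * (d:ℝ)^(3*k1) / d) * ((C2+1) * (d:ℝ)^(3*k2)) * ((C3+1) * (d:ℝ)^(3*k3))
      + ((d:ℝ)^(3*k1)) * (C2 * (d:ℝ)^(3*k2) / d) * ((C3+1) * (d:ℝ)^(3*k3))
      + ((d:ℝ)^(3*k1)) * ((d:ℝ)^(3*k2)) * (C3 * (d:ℝ)^(3*k3) / d)
      = (C1*((C2+1)*(C3+1)) + (C2*(C3+1) + C3)) * ((d:ℝ)^(3*(k1+k2+k3)) / (d:ℝ)) := by
    field_simp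
    ring
  calc |S k1 d * S k2 d * S k3 d - P1 * P2 * P3| ≤ _ := habs
    _ ≤ _ := add_le_add (add_le_add t1 t2) t3
    _ = _ := collect

end Aux

/-- For fixed `δ ≥ 0`, summing over all ordered triples `(δ1, δ2, δ3)` of nonnegative
integers with `δ1 + δ2 + δ3 = δ`,
`Σ 1^{δ1} 2^{δ2} (3/2)^{δ3} S_{δ1}(d) S_{δ2}(d) S_{δ3}(d) = ((3/2)d³)^δ/δ! + O(d^{3δ−1})`. -/
theorem stmt4 (δ : ℕ) :
    (fun d : ℕ =>
        (∑ δ1 ∈ Finset.range (δ + 1), ∑ δ2 ∈ Finset.range (δ - δ1 + 1),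
          (1 : ℝ) ^ δ1 * 2 ^ δ2 * (3 / 2) ^ (δ - δ1 - δ2) *
            S δ1 d * S δ2 d * S (δ - δ1 - δ2) d)
        - ((3 / 2) * (d : ℝ) ^ 3) ^ δ / (Nat.factorial δ)) =O[atTop]
      fun d : ℕ => (d : ℝ) ^ ((3 * δ : ℤ) - 1) := by
  have hg : ∀ d : ℕ, ((3/2) * (d:ℝ)^3)^δ / (δ.factorial : ℝ)
      = ∑ a ∈ Finset.range (δ+1), ∑ b ∈ Finset.range (δ-a+1),
          (1:ℝ)^a * 2^b * (3/2)^(δ-a-b) * ((d:ℝ)^(3*a)/(3^a*(a.factorial:ℝ)))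
            * ((d:ℝ)^(3*b)/(3^b*(b.factorial:ℝ)))
            * ((d:ℝ)^(3*(δ-a-b))/(3^(δ-a-b)*((δ-a-b).factorial:ℝ))) := by
    intro d
    have ht := trinomial ((d:ℝ)^3/3) (2*(d:ℝ)^3/3) ((d:ℝ)^3/2) δ
    have hsum : (d:ℝ)^3/3 + 2*(d:ℝ)^3/3 + (d:ℝ)^3/2 = (3/2) * (d:ℝ)^3 := by ring
    rw [← hsum, ← ht, Finset.sum_div]
    apply Finset.sum_congr rfl; intro a ha
    rw [Finset.sum_div]
    apply Finset.sum_congr rfl; intro b hb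
    exact term_eq δ a b (by simp only [Finset.mem_range] at ha; omega)
      (by simp only [Finset.mem_range] at hb; omega) (d:ℝ)
  have main : (fun d : ℕ => ∑ a ∈ Finset.range (δ+1), ∑ b ∈ Finset.range (δ-a+1),
      (1:ℝ)^a * 2^b * (3/2)^(δ-a-b) *
        (S a d * S b d * S (δ-a-b) d
         - ((d:ℝ)^(3*a)/(3^a*(a.factorial:ℝ))) * ((d:ℝ)^(3*b)/(3^b*(b.factorial:ℝ)))
           * ((d:ℝ)^(3*(δ-a-b))/(3^(δ-a-b)*((δ-a-b).factorial:ℝ)))))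
      =O[atTop] fun d : ℕ => (d:ℝ)^((3*δ:ℤ)-1) := by
    apply IsBigO.fun_sum
    intro a ha
    apply IsBigO.fun_sum
    intro b hb
    simp only [Finset.mem_range] at ha hb
    have h := ((triple_isBigO a b (δ-a-b)).const_mul_left ((1:ℝ)^a * 2^b * (3/2)^(δ-a-b)))
    have hexp : 3*((a:ℤ)+(b:ℤ)+((δ-a-b : ℕ):ℤ)) - 1 = 3*(δ:ℤ) - 1 := by omega
    rw [hexp] at h
    exact h
  have heq : ∀ d : ℕ,
      (∑ a ∈ Finset.range (δ+1), ∑ b ∈ Finset.range (δ-a+1),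
        (1:ℝ)^a * 2^b * (3/2)^(δ-a-b) *
          (S a d * S b d * S (δ-a-b) d
           - ((d:ℝ)^(3*a)/(3^a*(a.factorial:ℝ))) * ((d:ℝ)^(3*b)/(3^b*(b.factorial:ℝ)))
             * ((d:ℝ)^(3*(δ-a-b))/(3^(δ-a-b)*((δ-a-b).factorial:ℝ)))))
      = (∑ δ1 ∈ Finset.range (δ + 1), ∑ δ2 ∈ Finset.range (δ - δ1 + 1),
          (1 : ℝ) ^ δ1 * 2 ^ δ2 * (3 / 2) ^ (δ - δ1 - δ2) *
            S δ1 d * S δ2 d * S (δ - δ1 - δ2) d)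
        - ((3 / 2) * (d : ℝ) ^ 3) ^ δ / (Nat.factorial δ) := by
    intro d
    rw [hg d, ← Finset.sum_sub_distrib]
    apply Finset.sum_congr rfl; intro a ha
    rw [← Finset.sum_sub_distrib]
    apply Finset.sum_congr rfl; intro b hb
    ring
  exact main.congr_left heq
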